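/- Let α : G → Aut(K(H)) be an action on compact operators and let ᾱ : G → Aut(K(H̄)) be the conjugate action on the conjugate Hilbert space, ᾱ_g(T̄) = conj(α_g(T)). Then G_{ᾱ} = {(g, v̄) : (g,v) ∈ G_α}, and the map (g,v) ↦ (g, v̄) is a group isomorphism G_α → G_{ᾱ} over G which conjugates the 𝕋-inclusion, i.e. it sends (e, z·1) to (e, z̄·1). Consequently [G_{ᾱ}] = [G_α]⁻¹ in Twist(G). -/

import Mathlib

/-- Let `α : G → Aut(K(H))` be an action on compact operators and `ᾱ` the conjugate
action on the conjugate Hilbert space `H̄` (described via the conjugate-linear,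
multiplicative, star-preserving bijection `bar : B(H) → B(H̄)`, `T ↦ T̄`).
Then `G_ᾱ = {(g, v̄) : (g, v) ∈ G_α}` and `(g, v) ↦ (g, v̄)` is a group isomorphism
`G_α → G_ᾱ` over `G` which conjugates the `𝕋`-inclusion, i.e. sends `(e, z·1)` to
`(e, z̄·1)`; consequently `[G_ᾱ] = [G_α]⁻¹` in `Twist(G)`. -/
theorem stmt12 {G : Type*} [Group G]
    {H H' : Type*}
    [NormedAddCommGroup H] [InnerProductSpace ℂ H] [CompleteSpace H]
    [NormedAddCommGroup H'] [InnerProductSpace ℂ H'] [CompleteSpace H']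
    -- the conjugation map `T ↦ T̄` from `B(H)` to `B(H̄)`
    (bar : (H →L[ℂ] H) → (H' →L[ℂ] H'))
    (hbij : Function.Bijective bar)
    (hmul : ∀ S T : H →L[ℂ] H, bar (S * T) = bar S * bar T)
    (hone : bar 1 = 1)
    (hstar : ∀ T : H →L[ℂ] H, bar (star T) = star (bar T))
    (hsmul : ∀ (z : ℂ) (T : H →L[ℂ] H), bar (z • T) = (starRingEnd ℂ z) • bar T)
    (hcpt : ∀ T : H →L[ℂ] H, IsCompactOperator ⇑T ↔ IsCompactOperator ⇑(bar T))
    -- the action `α` and its conjugate `ᾱ`, with `ᾱ_g (T̄) = conj (α_g T)`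
    (α : G → (H →L[ℂ] H) → (H →L[ℂ] H))
    (αbar : G → (H' →L[ℂ] H') → (H' →L[ℂ] H'))
    (hconj : ∀ (g : G) (T : H →L[ℂ] H), IsCompactOperator ⇑T →
      αbar g (bar T) = bar (α g T)) :
    -- (1) `G_ᾱ = {(g, v̄) : (g,v) ∈ G_α}`
    (∀ (g : G) (u' : H' →L[ℂ] H'), u' ∈ unitary (H' →L[ℂ] H') →
      ((∀ T' : H' →L[ℂ] H', IsCompactOperator ⇑T' →
          αbar g T' = u' * T' * star u') ↔
        ∃ v : H →L[ℂ] H, v ∈ unitary (H →L[ℂ] H) ∧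
          (∀ T : H →L[ℂ] H, IsCompactOperator ⇑T → α g T = v * T * star v) ∧
          u' = bar v)) ∧
    -- (2) `(g,v) ↦ (g, v̄)` is multiplicative and bijective
    (∀ v w : H →L[ℂ] H, bar (v * w) = bar v * bar w) ∧
    (Function.Injective fun p : G × (H →L[ℂ] H) => (p.1, bar p.2)) ∧
    (∀ v : H →L[ℂ] H, v ∈ unitary (H →L[ℂ] H) → bar v ∈ unitary (H' →L[ℂ] H')) ∧
    -- (3) it conjugates the `𝕋`-inclusion: `(e, z·1) ↦ (e, z̄·1)`
    (∀ z : Circle, bar ((z : ℂ) • (1 : H →L[ℂ] H)) =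
      ((z⁻¹ : Circle) : ℂ) • (1 : H' →L[ℂ] H')) := by
  have hunit : ∀ v : H →L[ℂ] H, v ∈ unitary (H →L[ℂ] H) → bar v ∈ unitary (H' →L[ℂ] H') := by
    intro v hv
    obtain ⟨h1, h2⟩ := hv
    constructor
    · rw [← hstar, ← hmul, h1, hone]
    · rw [← hstar, ← hmul, h2, hone]
  refine ⟨?_, hmul, ?_, hunit, ?_⟩
  · intro g u' hu'
    constructor
    · intro h
      obtain ⟨v, rfl⟩ := hbij.2 u'
      refine ⟨v, ?_, ?_, rfl⟩
      · obtain ⟨h1, h2⟩ := hu'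
        constructor
        · apply hbij.1; rw [hmul, hstar, hone]; exact h1
        · apply hbij.1; rw [hmul, hstar, hone]; exact h2
      · intro T hT
        apply hbij.1
        rw [← hconj g T hT, hmul, hmul, hstar]
        exact h (bar T) ((hcpt T).1 hT)
    · rintro ⟨v, hv, hα, rfl⟩
      intro T' hT'
      obtain ⟨T, rfl⟩ := hbij.2 T'
      have hT : IsCompactOperator ⇑T := (hcpt T).2 hT'
      rw [hconj g T hT, hα T hT, hmul, hmul, hstar]
  · intro ⟨g1, v1⟩ ⟨g2, v2⟩ h
    simp only [Prod.mk.injEq] at h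
    exact Prod.ext h.1 (hbij.1 h.2)
  · intro z
    rw [hsmul, hone]
    congr 1
    rw [Circle.coe_inv, Complex.inv_eq_conj (Circle.norm_coe z)]
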